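/- Suppose T and U are necklaces, u : U → S and t : T → S are maps of simplicial sets with t totally nondegenerate. Then there is at most one surjective map of necklaces f : U → T (preserving initial and final vertices) with u = t ∘ f. -/

import Mathlib

open CategoryTheory Simplicial

namespace Paper

/-- The directed-edge relation on vertices of a simplicial set. -/
def edgeRel (X : SSet) (x y : X _⦋0⦌) : Prop :=
  ∃ e : X _⦋1⦌, X.δ 1 e = x ∧ X.δ 0 e = y

/-- `x ⪯ y` iff there is a finite directed path of 1-simplices from `x` to `y`. -/
def vertPath (X : SSet) : X _⦋0⦌ → X _⦋0⦌ → Prop :=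
  Relation.ReflTransGen (edgeRel X)

/-- The sequence of vertices of an `n`-simplex. -/
def vertexSeq {X : SSet} {n : ℕ} (x : X _⦋n⦌) : Fin (n + 1) → X _⦋0⦌ :=
  fun i => X.map (SimplexCategory.const (⦋0⦌ : SimplexCategory) ⦋n⦌ i).op x

/-- A simplicial set is *ordered* if the path preorder on its vertices is
antisymmetric and every simplex is determined by its sequence of vertices. -/
def Ordered (X : SSet) : Prop :=
  (∀ x y : X _⦋0⦌, vertPath X x y → vertPath X y x → x = y) ∧
  (∀ (n : ℕ) (x y : X _⦋n⦌), vertexSeq x = vertexSeq y → x = y)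

/-- A hands-on model of the standard `n`-simplex. -/
def Δstd (n : ℕ) : SSet where
  obj m := Fin (m.unop.len + 1) →o Fin (n + 1)
  map φ := TypeCat.ofHom fun f => f.comp φ.unop.toOrderHom
  map_id _ := rfl
  map_comp _ _ := rfl

/-- The condition cutting a necklace with joint set `J` out of `Δstd N`:
no joint lies strictly between the first and last vertex of the simplex. -/
def NeckCond {N : ℕ} (J : Finset (Fin (N + 1))) {m : SimplexCategoryᵒᵖ}
    (f : Fin (m.unop.len + 1) →o Fin (N + 1)) : Prop :=
  ∀ t ∈ J, ¬ (f 0 < t ∧ t < f (Fin.last m.unop.len))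

/-- The necklace with vertices `0,…,N` and joints `J` (a wedge of simplices glued
end to end; the beads span the intervals between consecutive joints). -/
def Necklace (N : ℕ) (J : Finset (Fin (N + 1))) : SSet where
  obj m := { f : Fin (m.unop.len + 1) →o Fin (N + 1) // NeckCond J f }
  map φ := TypeCat.ofHom fun f => ⟨f.1.comp φ.unop.toOrderHom, by
    intro t ht h
    exact f.2 t ht ⟨lt_of_le_of_lt (f.1.monotone (Fin.zero_le _)) h.1,
      lt_of_lt_of_le h.2 (f.1.monotone (Fin.le_last _))⟩⟩
  map_id _ := rfl
  map_comp _ _ := rfl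

/-- The vertex `v` of a necklace. -/
def vtx {N : ℕ} (J : Finset (Fin (N + 1))) (v : Fin (N + 1)) : (Necklace N J) _⦋0⦌ :=
  ⟨⟨fun _ => v, fun _ _ _ => le_rfl⟩, fun _ _ h => absurd (h.1.trans h.2) (lt_irrefl v)⟩

/-- The canonical inclusion of a necklace into the simplex on its vertices. -/
def neckIncl (N : ℕ) (J : Finset (Fin (N + 1))) : Necklace N J ⟶ Δstd N where
  app _ := TypeCat.ofHom fun f => f.1
  naturality _ _ _ := rfl

lemma eq_vtx {N : ℕ} {J : Finset (Fin (N + 1))} (x : (Necklace N J) _⦋0⦌) :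
    x = vtx J (x.1 0) := by
  refine Subtype.ext (OrderHom.ext _ _ (funext fun i => ?_))
  have : i = 0 := Subsingleton.elim (α := Fin 1) i 0
  rw [this]; rfl

/-- The map induced on vertices by a map of necklaces. -/
def nvmap {N N' : ℕ} {J : Finset (Fin (N + 1))} {J' : Finset (Fin (N' + 1))}
    (g : Necklace N J ⟶ Necklace N' J') : Fin (N + 1) → Fin (N' + 1) :=
  fun v => (g.app (Opposite.op (⦋0⦌ : SimplexCategory)) (vtx J v)).1 0

lemma app_vtx {N N' : ℕ} {J : Finset (Fin (N + 1))} {J' : Finset (Fin (N' + 1))}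
    (g : Necklace N J ⟶ Necklace N' J') (v : Fin (N + 1)) :
    g.app (Opposite.op (⦋0⦌ : SimplexCategory)) (vtx J v) = vtx J' (nvmap g v) :=
  eq_vtx _

lemma nvmap_comp {N N' N'' : ℕ} {J : Finset (Fin (N + 1))} {J' : Finset (Fin (N' + 1))}
    {J'' : Finset (Fin (N'' + 1))} (g : Necklace N J ⟶ Necklace N' J')
    (h : Necklace N' J' ⟶ Necklace N'' J'') :
    nvmap (g ≫ h) = nvmap h ∘ nvmap g := by
  funext v
  show (h.app _ (g.app _ (vtx J v))).1 0 = _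
  rw [app_vtx g v]
  rfl

/-- A map of simplicial sets is a *simple inclusion* if it has the right lifting
property with respect to the endpoint inclusions `∂Δ¹ ↪ T` for every necklace `T`. -/
def IsSimpleInclusion {A X : SSet} (i : A ⟶ X) : Prop :=
  ∀ (N : ℕ) (J : Finset (Fin (N + 1))), (0 : Fin (N + 1)) ∈ J → Fin.last N ∈ J →
    ∀ (v : Necklace N J ⟶ X) (a b : A _⦋0⦌),
      i.app _ a = v.app _ (vtx J 0) → i.app _ b = v.app _ (vtx J (Fin.last N)) →
      ∃ l : Necklace N J ⟶ A, l ≫ i = v ∧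
        l.app _ (vtx J 0) = a ∧ l.app _ (vtx J (Fin.last N)) = b

def Pstd (m : ℕ) (n : Fin m → ℕ) : SSet where
  obj k := ∀ i : Fin m, Fin (k.unop.len + 1) →o Fin (n i + 1)
  map φ := TypeCat.ofHom fun f => fun i => (f i).comp φ.unop.toOrderHom
  map_id _ := rfl
  map_comp _ _ := rfl

/-- A simplex of a simplicial set is nondegenerate if it is not the image of a
lower-dimensional simplex under a degeneracy operator. -/
def IsNondeg {X : SSet} {n : ℕ} (x : X _⦋n⦌) : Prop :=
  ∀ (m : ℕ) (σ : (⦋n⦌ : SimplexCategory) ⟶ ⦋m⦌) (y : X _⦋m⦌),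
    Function.Surjective σ.toOrderHom → x = X.map σ.op y → n ≤ m

/-- A simplex is degenerate if it is the image of a  strictly lower-dimensional
simplex under a (surjective) degeneracy operator. -/
def IsDegenerate {X : SSet} {n : ℕ} (x : X _⦋n⦌) : Prop :=
  ∃ (m : ℕ) (σ : (⦋n⦌ : SimplexCategory) ⟶ ⦋m⦌) (y : X _⦋m⦌),
    m < n ∧ Function.Surjective σ.toOrderHom ∧ x = X.map σ.op y


/-- The bead of a necklace spanning two consecutive joints `j ≤ j'`. -/
def bead {N : ℕ} (J : Finset (Fin (N + 1))) (j j' : Fin (N + 1)) (hle : j ≤ j')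
    (hcons : ∀ t ∈ J, ¬ (j < t ∧ t < j')) :
    (Necklace N J) _⦋j'.val - j.val⦌ :=
  ⟨⟨fun k => ⟨j.val + k.val, by
        have hk := k.isLt
        simp only [Opposite.unop_op, SimplexCategory.len_mk] at hk
        have := j'.isLt; omega⟩,
      fun k k' h => by
        simp only [Fin.mk_le_mk]
        exact Nat.add_le_add_left h j.val⟩,
    by
      intro t ht h
      refine hcons t ht ⟨?_, ?_⟩
      · have h1 := h.1
        change j.val + 0 < t.val at h1
        rw [Fin.lt_def]
        omega
      · have h2 := h.2
        have hle' : j.val ≤ j'.val := hle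
        change t.val < j.val + (j'.val - j.val) at h2
        rw [Fin.lt_def]
        omega⟩

/-- A map from a necklace is totally nondegenerate if it sends each bead to a
nondegenerate simplex. -/
def TotallyNondeg {N : ℕ} {J : Finset (Fin (N + 1))} {S : SSet}
    (f : Necklace N J ⟶ S) : Prop :=
  ∀ (j j' : Fin (N + 1)), j ∈ J → j' ∈ J → ∀ (hlt : j < j')
    (hcons : ∀ t ∈ J, ¬ (j < t ∧ t < j')),
    IsNondeg (f.app _ (bead J j j' hlt.le hcons))

/-- A levelwise surjection of simplicial sets. -/
def LevelSurj {X Y : SSet} (f : X ⟶ Y) : Prop :=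
  ∀ m, Function.Surjective (f.app m)

/-- The category of necklaces over `S` with endpoints `a` and `b`. -/
structure NecOver (S : SSet) (a b : S _⦋0⦌) where
  N : ℕ
  J : Finset (Fin (N + 1))
  h0 : (0 : Fin (N + 1)) ∈ J
  hN : Fin.last N ∈ J
  f : Necklace N J ⟶ S
  ha : f.app _ (vtx J 0) = a
  hb : f.app _ (vtx J (Fin.last N)) = b

instance (S : SSet) (a b : S _⦋0⦌) : Category (NecOver S a b) where
  Hom t u := { g : Necklace t.N t.J ⟶ Necklace u.N u.J //
    g ≫ u.f = t.f ∧ g.app _ (vtx t.J 0) = vtx u.J 0 ∧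
    g.app _ (vtx t.J (Fin.last t.N)) = vtx u.J (Fin.last u.N) }
  id t := ⟨𝟙 _, Category.id_comp _, rfl, rfl⟩
  comp {t u v} g h := ⟨g.1 ≫ h.1, by rw [Category.assoc, h.2.1, g.2.1],
    by show h.1.app _ (g.1.app _ _) = _; rw [g.2.2.1, h.2.2.1],
    by show h.1.app _ (g.1.app _ _) = _; rw [g.2.2.2, h.2.2.2]⟩
  id_comp g := Subtype.ext (Category.id_comp _)
  comp_id g := Subtype.ext (Category.comp_id _)
  assoc f g h := Subtype.ext (Category.assoc _ _ _)


/-- Flagged necklaces over `S` with endpoints `a, b` and flags of length `n`. -/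
structure FlaggedNec (S : SSet) (a b : S _⦋0⦌) (n : ℕ) where
  N : ℕ
  J : Finset (Fin (N + 1))
  h0 : (0 : Fin (N + 1)) ∈ J
  hN : Fin.last N ∈ J
  f : Necklace N J ⟶ S
  ha : f.app _ (vtx J 0) = a
  hb : f.app _ (vtx J (Fin.last N)) = b
  flag : Fin (n + 1) → Finset (Fin (N + 1))
  flag_mono : Monotone flag
  flag_joints : J ⊆ flag 0

instance (S : SSet) (a b : S _⦋0⦌) (n : ℕ) : Category (FlaggedNec S a b n) where
  Hom t u := { g : Necklace t.N t.J ⟶ Necklace u.N u.J //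
    g ≫ u.f = t.f ∧ g.app _ (vtx t.J 0) = vtx u.J 0 ∧
    g.app _ (vtx t.J (Fin.last t.N)) = vtx u.J (Fin.last u.N) ∧
    ∀ i, (t.flag i).image (nvmap g) = u.flag i }
  id t := ⟨𝟙 _, Category.id_comp _, rfl, rfl, fun i => by
    have : nvmap (𝟙 (Necklace t.N t.J)) = id := rfl
    rw [this, Finset.image_id]⟩
  comp {t u v} g h := ⟨g.1 ≫ h.1, by rw [Category.assoc, h.2.1, g.2.1],
    by show h.1.app _ (g.1.app _ _) = _; rw [g.2.2.1, h.2.2.1],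
    by show h.1.app _ (g.1.app _ _) = _; rw [g.2.2.2.1, h.2.2.2.1],
    fun i => by
      rw [nvmap_comp, ← Finset.image_image, g.2.2.2.2 i, h.2.2.2.2 i]⟩
  id_comp g := Subtype.ext (Category.id_comp _)
  comp_id g := Subtype.ext (Category.comp_id _)
  assoc f g h := Subtype.ext (Category.assoc _ _ _)


section Stmt13Aux

/-- `a` and `a'` are consecutive joints of `J`. -/
def Consec {N : ℕ} (J : Finset (Fin (N + 1))) (a a' : Fin (N + 1)) : Prop :=
  a ∈ J ∧ a' ∈ J ∧ a < a' ∧ ∀ s ∈ J, ¬ (a < s ∧ s < a')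

variable {N N' : ℕ} {J : Finset (Fin (N + 1))} {J' : Finset (Fin (N' + 1))}

lemma app_apply (f : Necklace N J ⟶ Necklace N' J') {m : SimplexCategoryᵒᵖ}
    (x : (Necklace N J).obj m) (k : Fin (m.unop.len + 1)) :
    (f.app m x).1 k = nvmap f (x.1 k) := by
  have h := FunctorToTypes.naturality f
    (SimplexCategory.const (⦋0⦌ : SimplexCategory) m.unop k).op x
  have h1 : (Necklace N J).map (SimplexCategory.const (⦋0⦌ : SimplexCategory) m.unop k).op x
      = vtx J (x.1 k) := rfl
  rw [h1, app_vtx] at h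
  exact (congrArg (fun y : (Necklace N' J').obj (Opposite.op (⦋0⦌ : SimplexCategory)) =>
    y.1 0) h).symm

lemma nvmap_mono (f : Necklace N J ⟶ Necklace N' J') : Monotone (nvmap f) := by
  rw [Fin.monotone_iff_le_succ]
  intro i
  have hb : ∀ j : Fin 2, i.val + j.val < N + 1 := by
    intro j
    have h1 : i.val < N := i.isLt
    have h2 : j.val < 2 := j.isLt
    omega
  set e : (Necklace N J) _⦋1⦌ := ⟨⟨fun j => ⟨i.val + j.val, hb j⟩,
    fun j j' h => by
      simp only [Fin.mk_le_mk]
      exact Nat.add_le_add_left h _⟩, by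
    intro s _ h
    have h1 : i.val + (0 : Fin 2).val < s.val := h.1
    have h2 : s.val < i.val + (Fin.last 1).val := h.2
    simp only [Fin.val_zero, Fin.val_last] at h1 h2
    omega⟩ with he
  have h0 := app_apply f e 0
  have h1 := app_apply f e (Fin.last 1)
  have hmono := (f.app _ e).1.monotone (Fin.zero_le (Fin.last 1))
  rw [h0, h1] at hmono
  have e0 : e.1 0 = i.castSucc := by
    apply Fin.ext
    simp [he, Fin.val_zero]
    rfl
  have e1 : e.1 (Fin.last 1) = i.succ := by
    apply Fin.ext
    simp [he, Fin.val_last]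
    rfl
  rwa [e0, e1] at hmono

lemma nvmap_surj (f : Necklace N J ⟶ Necklace N' J') (hfs : LevelSurj f) :
    Function.Surjective (nvmap f) := by
  intro w
  obtain ⟨x, hx⟩ := hfs (Opposite.op (⦋0⦌ : SimplexCategory)) (vtx J' w)
  refine ⟨x.1 0, ?_⟩
  have h := app_apply f x 0
  rw [hx] at h
  exact h.symm

lemma image_cond (f : Necklace N J ⟶ Necklace N' J') {m : SimplexCategoryᵒᵖ}
    (x : (Necklace N J).obj m) :
    ∀ s ∈ J', ¬ (nvmap f (x.1 0) < s ∧ s < nvmap f (x.1 (Fin.last m.unop.len))) := by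
  intro s hs h
  refine (f.app m x).2 s hs ?_
  rwa [app_apply, app_apply]

lemma consec_overlap {a a' α α' : Fin (N + 1)} (h1 : Consec J a a') (h2 : Consec J α α')
    (h3 : a < α') (h4 : α < a') : a = α ∧ a' = α' := by
  obtain ⟨haJ, ha'J, hlt, hcons⟩ := h1
  obtain ⟨hαJ, hα'J, hlt', hcons'⟩ := h2
  have he : a = α := by
    rcases lt_trichotomy a α with h | h | h
    · exact ((hcons α hαJ) ⟨h, h4⟩).elim
    · exact h
    · exact ((hcons' a haJ) ⟨h, h3⟩).elim
  subst he
  refine ⟨rfl, ?_⟩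
  rcases lt_trichotomy a' α' with h | h | h
  · exact ((hcons' a' ha'J) ⟨hlt, h⟩).elim
  · exact h
  · exact ((hcons α' hα'J) ⟨hlt', h⟩).elim

lemma exists_next (hN : Fin.last N ∈ J) {v : Fin (N + 1)} (hv : v < Fin.last N) :
    ∃ b ∈ J, v < b ∧ ∀ s ∈ J, v < s → b ≤ s := by
  classical
  obtain ⟨b, hb, hmin⟩ := Finset.exists_min_image (J.filter (fun s => v < s)) id
    ⟨Fin.last N, Finset.mem_filter.2 ⟨hN, hv⟩⟩
  rw [Finset.mem_filter] at hb
  exact ⟨b, hb.1, hb.2, fun s hs hvs => hmin s (Finset.mem_filter.2 ⟨hs, hvs⟩)⟩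

lemma exists_minge (hN : Fin.last N ∈ J) (v : Fin (N + 1)) :
    ∃ b ∈ J, v ≤ b ∧ ∀ s ∈ J, v ≤ s → b ≤ s := by
  classical
  obtain ⟨b, hb, hmin⟩ := Finset.exists_min_image (J.filter (fun s => v ≤ s)) id
    ⟨Fin.last N, Finset.mem_filter.2 ⟨hN, Fin.le_last v⟩⟩
  rw [Finset.mem_filter] at hb
  exact ⟨b, hb.1, hb.2, fun s hs hvs => hmin s (Finset.mem_filter.2 ⟨hs, hvs⟩)⟩

lemma exists_maxle (h0 : (0 : Fin (N + 1)) ∈ J) (v : Fin (N + 1)) :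
    ∃ a ∈ J, a ≤ v ∧ ∀ s ∈ J, s ≤ v → s ≤ a := by
  classical
  obtain ⟨a, ha, hmax⟩ := Finset.exists_max_image (J.filter (fun s => s ≤ v)) id
    ⟨0, Finset.mem_filter.2 ⟨h0, Fin.zero_le v⟩⟩
  rw [Finset.mem_filter] at ha
  exact ⟨a, ha.1, ha.2, fun s hs hvs => hmax s (Finset.mem_filter.2 ⟨hs, hvs⟩)⟩

lemma exists_maxlt (h0 : (0 : Fin (N + 1)) ∈ J) {v : Fin (N + 1)} (hv : 0 < v) :
    ∃ a ∈ J, a < v ∧ ∀ s ∈ J, s < v → s ≤ a := by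
  classical
  obtain ⟨a, ha, hmax⟩ := Finset.exists_max_image (J.filter (fun s => s < v)) id
    ⟨0, Finset.mem_filter.2 ⟨h0, hv⟩⟩
  rw [Finset.mem_filter] at ha
  exact ⟨a, ha.1, ha.2, fun s hs hvs => hmax s (Finset.mem_filter.2 ⟨hs, hvs⟩)⟩

end Stmt13Aux

section Stmt13Aux2

variable {N N' : ℕ} {J : Finset (Fin (N + 1))} {J' : Finset (Fin (N' + 1))}

/-- The `k`-th vertex of the bead spanning `[a, a']`. -/
def inBead (a a' : Fin (N + 1)) (k : Fin (a'.val - a.val + 1)) : Fin (N + 1) :=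
  ⟨a.val + k.val, by
    have h1 : k.val < a'.val - a.val + 1 := k.isLt
    have h2 : a'.val < N + 1 := a'.isLt
    have h3 : a.val < N + 1 := a.isLt
    omega⟩

lemma bead_apply (a a' : Fin (N + 1)) (hle : a ≤ a')
    (hcons : ∀ s ∈ J, ¬ (a < s ∧ s < a')) (k : Fin (a'.val - a.val + 1)) :
    (bead J a a' hle hcons).1 k = inBead a a' k := rfl

lemma inBead_zero (a a' : Fin (N + 1)) : inBead a a' 0 = a := by
  apply Fin.ext
  show a.val + (0 : Fin (a'.val - a.val + 1)).val = a.val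
  simp

lemma inBead_last (a a' : Fin (N + 1)) (hle : a ≤ a') :
    inBead a a' (Fin.last _) = a' := by
  apply Fin.ext
  show a.val + (Fin.last (a'.val - a.val)).val = a'.val
  have h : a.val ≤ a'.val := hle
  simp [Fin.val_last]
  omega

lemma le_inBead (a a' : Fin (N + 1)) (k : Fin (a'.val - a.val + 1)) : a ≤ inBead a a' k := by
  rw [Fin.le_def]
  exact Nat.le_add_right _ _

lemma inBead_le (a a' : Fin (N + 1)) (hle : a ≤ a') (k : Fin (a'.val - a.val + 1)) :
    inBead a a' k ≤ a' := by
  rw [Fin.le_def]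
  show a.val + k.val ≤ a'.val
  have h1 : k.val < a'.val - a.val + 1 := k.isLt
  have h2 : a.val ≤ a'.val := hle
  omega


lemma bead_zero {J : Finset (Fin (N + 1))} {a a' : Fin (N + 1)} (hle : a ≤ a')
    (hcons : ∀ s ∈ J, ¬ (a < s ∧ s < a')) :
    (bead J a a' hle hcons).1 0 = a := by
  apply Fin.ext
  show a.val + (0 : Fin ((Opposite.op (SimplexCategory.mk (a'.val - a.val))).unop.len + 1)).val
    = a.val
  rw [Fin.val_zero]
  omega

lemma bead_last {J : Finset (Fin (N + 1))} {a a' : Fin (N + 1)} (hle : a ≤ a')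
    (hcons : ∀ s ∈ J, ¬ (a < s ∧ s < a')) :
    (bead J a a' hle hcons).1 (Fin.last _) = a' := by
  apply Fin.ext
  show a.val + (Fin.last ((Opposite.op (SimplexCategory.mk (a'.val - a.val))).unop.len)).val
    = a'.val
  rw [Fin.val_last, Opposite.unop_op, SimplexCategory.len_mk]
  have h : a.val ≤ a'.val := hle
  omega

/-- The map on a bead induced by a vertex map `φ`. -/
def beadσ (φ : Fin (N + 1) → Fin (N' + 1)) (hm : Monotone φ) {a a' : Fin (N + 1)}
    (hle : a ≤ a') {b b' : Fin (N' + 1)} (hb : φ a = b) (hb' : φ a' = b') :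
    Fin (a'.val - a.val + 1) →o Fin (b'.val - b.val + 1) where
  toFun k := ⟨(φ (inBead a a' k)).val - b.val, by
    have h3 : (φ (inBead a a' k)).val ≤ b'.val := by
      have h := hm (inBead_le a a' hle k)
      rw [hb'] at h
      exact h
    omega⟩
  monotone' k k' hk := by
    have h := hm (show inBead a a' k ≤ inBead a a' k' from by
      rw [Fin.le_def]
      exact Nat.add_le_add_left hk _)
    simp only [Fin.mk_le_mk]
    exact Nat.sub_le_sub_right h _

lemma beadσ_val (φ : Fin (N + 1) → Fin (N' + 1)) (hm : Monotone φ) {a a' : Fin (N + 1)}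
    (hle : a ≤ a') {b b' : Fin (N' + 1)} (hb : φ a = b) (hb' : φ a' = b')
    (k : Fin (a'.val - a.val + 1)) :
    (beadσ φ hm hle hb hb' k).val = (φ (inBead a a' k)).val - b.val := rfl

lemma map_bead_eq (f : Necklace N J ⟶ Necklace N' J')
    {a a' : Fin (N + 1)} (hle : a ≤ a') (hcons : ∀ s ∈ J, ¬ (a < s ∧ s < a'))
    {b b' : Fin (N' + 1)} (hble : b ≤ b') (hcons' : ∀ s ∈ J', ¬ (b < s ∧ s < b'))
    (hm : Monotone (nvmap f)) (hb : nvmap f a = b) (hb' : nvmap f a' = b') :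
    (Necklace N' J').map (SimplexCategory.mkHom (beadσ (nvmap f) hm hle hb hb')).op
      (bead J' b b' hble hcons') = f.app _ (bead J a a' hle hcons) := by
  refine Subtype.ext (OrderHom.ext _ _ (funext fun k => ?_))
  rw [app_apply]
  apply Fin.ext
  show b.val + (beadσ (nvmap f) hm hle hb hb' k).val
    = (nvmap f ((bead J a a' hle hcons).1 k)).val
  rw [beadσ_val, bead_apply]
  have h2 : b.val ≤ (nvmap f (inBead a a' k)).val := by
    have h := hm (le_inBead a a' k)
    rw [hb] at h
    exact h
  omega

/-- A simplex is a total degeneracy of a vertex. -/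
def TotDeg {S : SSet} {n : ℕ} (x : S _⦋n⦌) : Prop :=
  ∃ y : S _⦋0⦌, x = S.map
    (SimplexCategory.const (SimplexCategory.mk n) (⦋0⦌ : SimplexCategory) 0).op y

lemma collapsed_totdeg {S : SSet} (f : Necklace N J ⟶ Necklace N' J') (t : Necklace N' J' ⟶ S)
    {a a' : Fin (N + 1)} (hle : a ≤ a') (hcons : ∀ s ∈ J, ¬ (a < s ∧ s < a'))
    (hcol : nvmap f a = nvmap f a') :
    TotDeg (t.app _ (f.app _ (bead J a a' hle hcons))) := by
  have hm := nvmap_mono f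
  have hconst : f.app _ (bead J a a' hle hcons)
      = (Necklace N' J').map
        (SimplexCategory.const (SimplexCategory.mk (a'.val - a.val)) (⦋0⦌ : SimplexCategory) 0).op
        (vtx J' (nvmap f a)) := by
    refine Subtype.ext (OrderHom.ext _ _ (funext fun k => ?_))
    rw [app_apply, bead_apply]
    show nvmap f (inBead a a' k) = nvmap f a
    refine le_antisymm ?_ (hm (le_inBead a a' k))
    have h := hm (inBead_le a a' hle k)
    rw [← hcol] at h
    exact h
  refine ⟨t.app _ (vtx J' (nvmap f a)), ?_⟩
  rw [hconst]
  exact FunctorToTypes.naturality t _ _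

end Stmt13Aux2

section Stmt13Aux3

lemma mono_endo_eq_id {n : ℕ} (h : Fin (n + 1) →o Fin (n + 1))
    (hinj : Function.Injective h) : ∀ k, h k = k := by
  have hsm : StrictMono h := h.monotone.strictMono_of_injective hinj
  have h1 : ∀ k, k ≤ h k := by
    intro k
    induction k using Fin.induction with
    | zero => exact Fin.zero_le _
    | succ i ih =>
      have h2 : i.castSucc < h i.succ := lt_of_le_of_lt ih (hsm (Fin.castSucc_lt_succ (i := i)))
      exact Fin.castSucc_lt_iff_succ_le.mp h2
  have h2 : ∀ k, h k ≤ k := by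
    intro k
    induction k using Fin.reverseInduction with
    | last => exact Fin.le_last _
    | cast i ih =>
      have h3 : h i.castSucc < i.succ :=
        lt_of_lt_of_le (hsm (Fin.castSucc_lt_succ (i := i))) ih
      exact Fin.le_castSucc_iff.mpr h3
  exact fun k => le_antisymm (h2 k) (h1 k)

lemma nondeg_no_epi {S : SSet} {e : ℕ} {z : S _⦋e⦌} (hz : IsNondeg z)
    (h : SimplexCategory.mk e ⟶ SimplexCategory.mk e)
    (hinj : ¬ Function.Injective h.toOrderHom) (hfix : S.map h.op z = z) : False := by
  cases e with
  | zero =>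
    refine hinj fun x y _ => ?_
    have hx : x.val < 1 := x.isLt
    have hy : y.val < 1 := y.isLt
    exact Fin.ext (by omega)
  | succ e =>
    obtain ⟨i, θ', hθ⟩ := SimplexCategory.eq_σ_comp_of_not_injective h hinj
    have hsurj : Function.Surjective (SimplexCategory.σ i).toOrderHom :=
      SimplexCategory.epi_iff_surjective.mp inferInstance
    have hz' : z = S.map (SimplexCategory.σ i).op (S.map θ'.op z) := by
      rw [← FunctorToTypes.map_comp_apply, ← op_comp, ← hθ, hfix]
    exact absurd (hz _ _ _ hsurj hz') (by omega)

lemma exists_section {d e : ℕ} (σ : Fin (d + 1) →o Fin (e + 1))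
    (hσ : Function.Surjective σ) :
    ∃ δ : Fin (e + 1) →o Fin (d + 1), ∀ j, σ (δ j) = j := by
  classical
  have hne : ∀ j, (Finset.univ.filter fun k => σ k = j).Nonempty := by
    intro j
    obtain ⟨k, hk⟩ := hσ j
    exact ⟨k, by simp [hk]⟩
  set mn : Fin (e + 1) → Fin (d + 1) :=
    fun j => (Finset.univ.filter fun k => σ k = j).min' (hne j) with hmn
  have hmnσ : ∀ j, σ (mn j) = j := by
    intro j
    have h := Finset.min'_mem _ (hne j)
    simpa [hmn] using h
  have hmono : Monotone mn := by
    intro j j' hj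
    by_contra hcon
    push_neg at hcon
    have h2 : j' ≤ j := by
      rw [← hmnσ j, ← hmnσ j']
      exact σ.monotone hcon.le
    have h3 : j = j' := le_antisymm hj h2
    rw [h3] at hcon
    exact lt_irrefl _ hcon
  exact ⟨⟨mn, hmono⟩, hmnσ⟩

lemma epi_unique {S : SSet} {d e : ℕ} {z : S _⦋e⦌} (hz : IsNondeg z)
    (σ τ : Fin (d + 1) →o Fin (e + 1)) (hσ : Function.Surjective σ)
    (h : S.map (SimplexCategory.mkHom σ).op z = S.map (SimplexCategory.mkHom τ).op z) :
    σ = τ := by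
  classical
  have key : ∀ δ : Fin (e + 1) →o Fin (d + 1), (∀ j, σ (δ j) = j) → ∀ j, τ (δ j) = j := by
    intro δ hδ
    by_contra hne
    push_neg at hne
    have c1 : SimplexCategory.mkHom δ ≫ SimplexCategory.mkHom σ = 𝟙 _ := by
      apply SimplexCategory.Hom.ext
      apply OrderHom.ext
      funext j
      exact hδ j
    have hfix : S.map (SimplexCategory.mkHom δ ≫ SimplexCategory.mkHom τ).op z = z := by
      rw [op_comp, FunctorToTypes.map_comp_apply, ← h,
        ← FunctorToTypes.map_comp_apply, ← op_comp, c1, op_id, FunctorToTypes.map_id_apply]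
    have hninj : ¬ Function.Injective
        (SimplexCategory.mkHom δ ≫ SimplexCategory.mkHom τ).toOrderHom := by
      intro hinj
      obtain ⟨j, hj⟩ := hne
      exact hj (mono_endo_eq_id _ hinj j)
    exact nondeg_no_epi hz _ hninj hfix
  have hne : ∀ j, (Finset.univ.filter fun k => σ k = j).Nonempty := by
    intro j
    obtain ⟨k, hk⟩ := hσ j
    exact ⟨k, by simp [hk]⟩
  set mn : Fin (e + 1) → Fin (d + 1) :=
    fun j => (Finset.univ.filter fun k => σ k = j).min' (hne j) with hmn
  set mx : Fin (e + 1) → Fin (d + 1) :=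
    fun j => (Finset.univ.filter fun k => σ k = j).max' (hne j) with hmx
  have hmnσ : ∀ j, σ (mn j) = j := by
    intro j
    have h := Finset.min'_mem _ (hne j)
    simpa [hmn] using h
  have hmxσ : ∀ j, σ (mx j) = j := by
    intro j
    have h := Finset.max'_mem _ (hne j)
    simpa [hmx] using h
  have hmnle : ∀ k, mn (σ k) ≤ k := fun k => Finset.min'_le _ _ (by simp)
  have hmxge : ∀ k, k ≤ mx (σ k) := fun k => Finset.le_max' _ _ (by simp)
  have hmnmono : Monotone mn := by
    intro j j' hj
    by_contra hcon
    push_neg at hcon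
    have h2 : j' ≤ j := by
      rw [← hmnσ j, ← hmnσ j']
      exact σ.monotone hcon.le
    rw [le_antisymm hj h2] at hcon
    exact lt_irrefl _ hcon
  have hmxmono : Monotone mx := by
    intro j j' hj
    by_contra hcon
    push_neg at hcon
    have h2 : j' ≤ j := by
      rw [← hmxσ j, ← hmxσ j']
      exact σ.monotone hcon.le
    rw [le_antisymm hj h2] at hcon
    exact lt_irrefl _ hcon
  have k1 := key ⟨mn, hmnmono⟩ hmnσ
  have k2 := key ⟨mx, hmxmono⟩ hmxσ
  apply OrderHom.ext
  funext k
  have h5 : τ k ≤ σ k := by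
    have h := τ.monotone (hmxge k)
    rw [show τ (mx (σ k)) = σ k from k2 (σ k)] at h
    exact h
  have h6 : σ k ≤ τ k := by
    have h := τ.monotone (hmnle k)
    rw [show τ (mn (σ k)) = σ k from k1 (σ k)] at h
    exact h
  exact le_antisymm h6 h5

end Stmt13Aux3

section Stmt13Aux4

variable {N N' : ℕ} {J : Finset (Fin (N + 1))} {J' : Finset (Fin (N' + 1))}

/-- A noncollapsed bead maps onto the bead of `J'` starting at the image of its
initial joint. -/
lemma lemA (h0 : (0 : Fin (N + 1)) ∈ J) (hN : Fin.last N ∈ J)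
    (f : Necklace N J ⟶ Necklace N' J') (hfs : LevelSurj f)
    {a a' : Fin (N + 1)} (hc : Consec J a a') (hlt : nvmap f a < nvmap f a')
    (hbin : nvmap f a ∈ J')
    {b' : Fin (N' + 1)} (hb'J : b' ∈ J') (hbgt : nvmap f a < b')
    (hbmin : ∀ s ∈ J', nvmap f a < s → b' ≤ s) :
    nvmap f a' = b' := by
  obtain ⟨haJ, ha'J, haa, hcons⟩ := hc
  have hm := nvmap_mono f
  have hcons' : ∀ s ∈ J', ¬ (nvmap f a < s ∧ s < b') :=
    fun s hs h => absurd (hbmin s hs h.1) (not_le.2 h.2)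
  obtain ⟨x, hx⟩ := hfs (Opposite.op (SimplexCategory.mk (b'.val - (nvmap f a).val)))
    (bead J' (nvmap f a) b' hbgt.le hcons')
  have hble : (nvmap f a).val ≤ b'.val := le_of_lt hbgt
  have hx0 : nvmap f (x.1 0) = nvmap f a := by
    have h := app_apply f x 0
    rw [hx, bead_zero] at h
    exact h.symm
  have hxl : nvmap f (x.1 (Fin.last _)) = b' := by
    have h := app_apply f x (Fin.last _)
    rw [hx, bead_last] at h
    exact h.symm
  have hxlt : x.1 0 < x.1 (Fin.last _) := by
    by_contra hcon
    push_neg at hcon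
    have h := hm hcon
    rw [hx0, hxl] at h
    exact absurd hbgt (not_lt.2 h)
  obtain ⟨α, hαJ, hαle, hαmax⟩ := exists_maxle h0 (x.1 0)
  obtain ⟨α', hα'J, hα'ge, hα'min⟩ := exists_minge hN (x.1 (Fin.last _))
  have hαlt : α < α' := lt_of_le_of_lt hαle (lt_of_lt_of_le hxlt hα'ge)
  have hαc : Consec J α α' := by
    refine ⟨hαJ, hα'J, hαlt, fun s hs hh => ?_⟩
    rcases le_or_gt s (x.1 0) with h' | h'
    · exact absurd (hαmax s hs h') (not_le.2 hh.1)
    rcases le_or_gt (x.1 (Fin.last _)) s with h'' | h''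
    · exact absurd (hα'min s hs h'') (not_le.2 hh.2)
    · exact x.2 s hs ⟨h', h''⟩
  have hbc : ∀ s ∈ J', ¬ (nvmap f α < s ∧ s < nvmap f α') := by
    have h := image_cond f (bead J α α' hαlt.le hαc.2.2.2)
    intro s hs hh
    refine h s hs ?_
    rw [bead_zero, bead_last]
    exact hh
  have hαle2 : nvmap f α ≤ nvmap f a := by
    have h := hm hαle
    rwa [hx0] at h
  have hα'ge2 : b' ≤ nvmap f α' := by
    have h := hm hα'ge
    rwa [hxl] at h
  have hφα : nvmap f α = nvmap f a := by
    rcases eq_or_lt_of_le hαle2 with h | h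
    · exact h
    · exact (hbc _ hbin ⟨h, lt_of_lt_of_le hbgt hα'ge2⟩).elim
  have hφα' : nvmap f α' = b' := by
    rcases eq_or_lt_of_le hα'ge2 with h | h
    · exact h.symm
    · exact (hbc _ hb'J ⟨by rw [hφα]; exact hbgt, h⟩).elim
  have h6 : a < α' := by
    by_contra hcon
    push_neg at hcon
    have h := hm hcon
    rw [hφα'] at h
    exact absurd hbgt (not_lt.2 h)
  have h7 : α < a' := by
    by_contra hcon
    push_neg at hcon
    have h := hm hcon
    rw [hφα] at h
    exact absurd hlt (not_lt.2 h)
  obtain ⟨hea, hea'⟩ := consec_overlap ⟨haJ, ha'J, haa, hcons⟩ hαc h6 h7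
  rw [hea']
  exact hφα'

end Stmt13Aux4

section Stmt13Aux5

variable {N N' : ℕ} {J : Finset (Fin (N + 1))} {J' : Finset (Fin (N' + 1))}

/-- Images of joints are joints. -/
lemma lemB (h0 : (0 : Fin (N + 1)) ∈ J) (hN : Fin.last N ∈ J)
    (h0' : (0 : Fin (N' + 1)) ∈ J') (hN' : Fin.last N' ∈ J')
    (f : Necklace N J ⟶ Necklace N' J') (hfs : LevelSurj f) (hf0 : nvmap f 0 = 0) :
    ∀ j ∈ J, nvmap f j ∈ J' := by
  suffices H : ∀ n : ℕ, ∀ j : Fin (N + 1), j.val ≤ n → j ∈ J → nvmap f j ∈ J' from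
    fun j hj => H j.val j le_rfl hj
  intro n
  induction n with
  | zero =>
    intro j hj _
    have hj0 : j = 0 := Fin.ext (by simpa using hj)
    rw [hj0, hf0]
    exact h0'
  | succ n ih =>
    intro j hj hjJ
    by_cases hj0 : j = 0
    · rw [hj0, hf0]
      exact h0'
    · have hpos : 0 < j := Fin.pos_of_ne_zero hj0
      obtain ⟨p, hpJ, hplt, hpmax⟩ := exists_maxlt h0 hpos
      have hpc : Consec J p j :=
        ⟨hpJ, hjJ, hplt, fun s hs hh => absurd (hpmax s hs hh.2) (not_le.2 hh.1)⟩
      have hpv : p.val ≤ n := by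
        have h1 : p.val < j.val := hplt
        omega
      have hp' : nvmap f p ∈ J' := ih p hpv hpJ
      rcases eq_or_lt_of_le (nvmap_mono f hplt.le) with he | hl
      · rw [← he]
        exact hp'
      · have hlast : nvmap f p < Fin.last N' := lt_of_lt_of_le hl (Fin.le_last _)
        obtain ⟨b', hb'J, hb'gt, hb'min⟩ := exists_next hN' hlast
        rw [lemA h0 hN f hfs hpc hl hp' hb'J hb'gt hb'min]
        exact hb'J

/-- A noncollapsed bead maps onto the corresponding bead of `J'`. -/
lemma lemC (h0 : (0 : Fin (N + 1)) ∈ J) (hN : Fin.last N ∈ J)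
    (h0' : (0 : Fin (N' + 1)) ∈ J') (hN' : Fin.last N' ∈ J')
    (f : Necklace N J ⟶ Necklace N' J') (hfs : LevelSurj f)
    (hf0 : nvmap f 0 = 0) (hfN : nvmap f (Fin.last N) = Fin.last N')
    {a a' : Fin (N + 1)} (hc : Consec J a a') (hlt : nvmap f a < nvmap f a')
    {w : Fin (N' + 1)} (hw1 : nvmap f a ≤ w) (hw2 : w ≤ nvmap f a') :
    ∃ v, a ≤ v ∧ v ≤ a' ∧ nvmap f v = w := by
  have hm := nvmap_mono f
  rcases eq_or_lt_of_le hw1 with he | hw1'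
  · exact ⟨a, le_rfl, hc.2.2.1.le, he⟩
  rcases eq_or_lt_of_le hw2 with he | hw2'
  · exact ⟨a', hc.2.2.1.le, le_rfl, he.symm⟩
  have hbJ : nvmap f a ∈ J' := lemB h0 hN h0' hN' f hfs hf0 a hc.1
  obtain ⟨b', hb'J, hb'gt, hb'min⟩ := exists_next hN' (lt_of_lt_of_le hlt (Fin.le_last _))
  have hfb' : nvmap f a' = b' := lemA h0 hN f hfs hc hlt hbJ hb'J hb'gt hb'min
  have hwJ : w ∉ J' := fun hw => absurd (hb'min w hw hw1') (not_le.2 (hfb' ▸ hw2'))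
  obtain ⟨v₀, hv₀⟩ := nvmap_surj f hfs w
  have hv₀l : v₀ < Fin.last N := by
    rcases eq_or_lt_of_le (Fin.le_last v₀) with he | hlt'
    · exfalso
      rw [he, hfN] at hv₀
      have h1 : w < Fin.last N' := lt_of_lt_of_le hw2' (Fin.le_last _)
      rw [← hv₀] at h1
      exact lt_irrefl _ h1
    · exact hlt'
  obtain ⟨α, hαJ, hαle, hαmax⟩ := exists_maxle h0 v₀
  obtain ⟨α', hα'J, hα'gt, hα'min⟩ := exists_next hN hv₀l
  have hαc : Consec J α α' := by
    refine ⟨hαJ, hα'J, lt_of_le_of_lt hαle hα'gt, fun s hs hh => ?_⟩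
    rcases le_or_gt s v₀ with h' | h'
    · exact absurd (hαmax s hs h') (not_le.2 hh.1)
    · exact absurd (hα'min s hs h') (not_le.2 hh.2)
  have h1 : nvmap f α ≤ w := by
    rw [← hv₀]
    exact hm hαle
  have h2 : w ≤ nvmap f α' := by
    rw [← hv₀]
    exact hm hα'gt.le
  have hαJ' : nvmap f α ∈ J' := lemB h0 hN h0' hN' f hfs hf0 α hαJ
  have h3 : nvmap f α < w := lt_of_le_of_ne h1 (fun he => hwJ (he ▸ hαJ'))
  have hαlt : nvmap f α < nvmap f α' := lt_of_lt_of_le h3 h2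
  obtain ⟨c', hc'J, hc'gt, hc'min⟩ := exists_next hN' (lt_of_lt_of_le hαlt (Fin.le_last _))
  have hfc' : nvmap f α' = c' := lemA h0 hN f hfs hαc hαlt hαJ' hc'J hc'gt hc'min
  have h4 : nvmap f α = nvmap f a := by
    rcases lt_trichotomy (nvmap f α) (nvmap f a) with h | h | h
    · exfalso
      have h5 : c' ≤ nvmap f a := hc'min _ hbJ h
      have h6 : nvmap f α' ≤ nvmap f a := by rw [hfc']; exact h5
      exact absurd (le_trans h2 h6) (not_le.2 hw1')
    · exact h
    · exfalso
      have h5 : b' ≤ nvmap f α := hb'min _ hαJ' h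
      have h6 : w < nvmap f α := lt_of_lt_of_le (hfb' ▸ hw2') h5
      exact absurd h6 (not_lt.2 h3.le)
  have h5 : nvmap f α' = nvmap f a' := by
    rw [hfc', hfb']
    refine le_antisymm (hc'min _ hb'J ?_) (hb'min _ hc'J ?_)
    · rw [h4]
      exact hb'gt
    · rw [← h4]
      exact hc'gt
  have h6 : a < α' := by
    by_contra hcon
    push_neg at hcon
    have h := hm hcon
    rw [h5] at h
    exact absurd hlt (not_lt.2 h)
  have h7 : α < a' := by
    by_contra hcon
    push_neg at hcon
    have h := hm hcon
    rw [h4] at h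
    exact absurd hlt (not_lt.2 h)
  obtain ⟨hea, hea'⟩ := consec_overlap hc hαc h6 h7
  refine ⟨v₀, ?_, ?_, hv₀⟩
  · rw [hea]
    exact hαle
  · rw [hea']
    exact hα'gt.le

end Stmt13Aux5

section Stmt13Aux6

variable {N N' : ℕ} {J : Finset (Fin (N + 1))} {J' : Finset (Fin (N' + 1))}

lemma beadσ_surj (h0 : (0 : Fin (N + 1)) ∈ J) (hN : Fin.last N ∈ J)
    (h0' : (0 : Fin (N' + 1)) ∈ J') (hN' : Fin.last N' ∈ J')
    (f : Necklace N J ⟶ Necklace N' J') (hfs : LevelSurj f)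
    (hf0 : nvmap f 0 = 0) (hfN : nvmap f (Fin.last N) = Fin.last N')
    {a a' : Fin (N + 1)} (hc : Consec J a a') (hle : a ≤ a')
    {b b' : Fin (N' + 1)} (hb : nvmap f a = b) (hb' : nvmap f a' = b')
    (hlt : nvmap f a < nvmap f a') :
    Function.Surjective (beadσ (nvmap f) (nvmap_mono f) hle hb hb') := by
  intro j
  have hbb' : b.val ≤ b'.val := by
    have h := hlt
    rw [hb, hb'] at h
    exact le_of_lt h
  set w : Fin (N' + 1) := ⟨b.val + j.val, by
    have h1 : j.val < b'.val - b.val + 1 := j.isLt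
    have h2 : b'.val < N' + 1 := b'.isLt
    omega⟩ with hw
  have hw1 : nvmap f a ≤ w := by
    rw [hb, Fin.le_def]
    show b.val ≤ b.val + j.val
    omega
  have hw2 : w ≤ nvmap f a' := by
    rw [hb', Fin.le_def]
    show b.val + j.val ≤ b'.val
    have h1 : j.val < b'.val - b.val + 1 := j.isLt
    omega
  obtain ⟨v, hv1, hv2, hv3⟩ := lemC h0 hN h0' hN' f hfs hf0 hfN hc hlt hw1 hw2
  have hva : a.val ≤ v.val := hv1
  have hbound : v.val - a.val < a'.val - a.val + 1 := by
    have h1 : v.val ≤ a'.val := hv2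
    omega
  refine ⟨⟨v.val - a.val, hbound⟩, ?_⟩
  apply Fin.ext
  rw [beadσ_val]
  have h9 : inBead a a' ⟨v.val - a.val, hbound⟩ = v := by
    apply Fin.ext
    show a.val + (v.val - a.val) = v.val
    omega
  rw [h9, hv3]
  show b.val + j.val - b.val = j.val
  omega

lemma nondeg_not_totdeg {S : SSet} (h0 : (0 : Fin (N + 1)) ∈ J) (hN : Fin.last N ∈ J)
    (h0' : (0 : Fin (N' + 1)) ∈ J') (hN' : Fin.last N' ∈ J')
    (f : Necklace N J ⟶ Necklace N' J') (hfs : LevelSurj f)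
    (hf0 : nvmap f 0 = 0) (hfN : nvmap f (Fin.last N) = Fin.last N')
    (t : Necklace N' J' ⟶ S) (ht : TotallyNondeg t)
    {a a' : Fin (N + 1)} (hc : Consec J a a') (hlt : nvmap f a < nvmap f a')
    (hle : a ≤ a') (hcons : ∀ s ∈ J, ¬ (a < s ∧ s < a')) :
    ¬ TotDeg (t.app _ (f.app _ (bead J a a' hle hcons))) := by
  rintro ⟨y, hy⟩
  have hbJ : nvmap f a ∈ J' := lemB h0 hN h0' hN' f hfs hf0 a hc.1
  obtain ⟨b', hb'J, hb'gt, hb'min⟩ := exists_next hN' (lt_of_lt_of_le hlt (Fin.le_last _))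
  have hfb' : nvmap f a' = b' := lemA h0 hN f hfs hc hlt hbJ hb'J hb'gt hb'min
  have hcons' : ∀ s ∈ J', ¬ (nvmap f a < s ∧ s < b') :=
    fun s hs h => absurd (hb'min s hs h.1) (not_le.2 h.2)
  have hz : IsNondeg (t.app _ (bead J' (nvmap f a) b' hb'gt.le hcons')) :=
    ht _ _ hbJ hb'J hb'gt hcons'
  have hσs : Function.Surjective (beadσ (nvmap f) (nvmap_mono f) hle rfl hfb') :=
    beadσ_surj h0 hN h0' hN' f hfs hf0 hfN hc hle rfl hfb' hlt
  have hmap := map_bead_eq f hle hcons hb'gt.le hcons' (nvmap_mono f) rfl hfb'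
  have hnat : t.app _ ((Necklace N' J').map
        (SimplexCategory.mkHom (beadσ (nvmap f) (nvmap_mono f) hle rfl hfb')).op
        (bead J' (nvmap f a) b' hb'gt.le hcons'))
      = S.map (SimplexCategory.mkHom (beadσ (nvmap f) (nvmap_mono f) hle rfl hfb')).op
        (t.app _ (bead J' (nvmap f a) b' hb'gt.le hcons')) :=
    FunctorToTypes.naturality t _ _
  rw [hmap, hy] at hnat
  obtain ⟨δ, hδ⟩ := exists_section _ hσs
  have c1 : SimplexCategory.mkHom δ ≫
      SimplexCategory.mkHom (beadσ (nvmap f) (nvmap_mono f) hle rfl hfb') = 𝟙 _ := by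
    apply SimplexCategory.Hom.ext
    apply OrderHom.ext
    funext j
    exact hδ j
  have hzz : t.app _ (bead J' (nvmap f a) b' hb'gt.le hcons')
      = S.map (SimplexCategory.mkHom δ ≫ SimplexCategory.const
          (SimplexCategory.mk (a'.val - a.val)) (⦋0⦌ : SimplexCategory) 0).op y := by
    rw [op_comp, FunctorToTypes.map_comp_apply, hnat, ← FunctorToTypes.map_comp_apply,
      ← op_comp, c1, op_id, FunctorToTypes.map_id_apply]
  have hsurj0 : Function.Surjective (SimplexCategory.mkHom δ ≫ SimplexCategory.const
      (SimplexCategory.mk (a'.val - a.val)) (⦋0⦌ : SimplexCategory) 0).toOrderHom := by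
    intro c
    refine ⟨0, ?_⟩
    apply Fin.ext
    have h1 : c.val < 1 := c.isLt
    have h2 : (((SimplexCategory.mkHom δ ≫ SimplexCategory.const
      (SimplexCategory.mk (a'.val - a.val)) (⦋0⦌ : SimplexCategory) 0).toOrderHom) 0).val < 1 :=
      Fin.isLt _
    omega
  have hle0 := hz _ _ _ hsurj0 hzz
  have hblt : (nvmap f a).val < b'.val := hb'gt
  omega

lemma lemF {S : SSet} (h0 : (0 : Fin (N + 1)) ∈ J) (hN : Fin.last N ∈ J)
    (h0' : (0 : Fin (N' + 1)) ∈ J') (hN' : Fin.last N' ∈ J')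
    (f g : Necklace N J ⟶ Necklace N' J') (hfs : LevelSurj f) (hgs : LevelSurj g)
    (hf0 : nvmap f 0 = 0) (hfN : nvmap f (Fin.last N) = Fin.last N')
    (hg0 : nvmap g 0 = 0) (hgN : nvmap g (Fin.last N) = Fin.last N')
    (t : Necklace N' J' ⟶ S) (ht : TotallyNondeg t)
    (hu : ∀ (m : SimplexCategoryᵒᵖ) (x : (Necklace N J).obj m),
      t.app m (f.app m x) = t.app m (g.app m x))
    {a a' : Fin (N + 1)} (hc : Consec J a a') (hle : a ≤ a')
    (hcons : ∀ s ∈ J, ¬ (a < s ∧ s < a'))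
    (ha : nvmap f a = nvmap g a)
    (hlt : nvmap f a < nvmap f a') (hlt2 : nvmap g a < nvmap g a')
    (ha' : nvmap f a' = nvmap g a') :
    ∀ v, a ≤ v → v ≤ a' → nvmap f v = nvmap g v := by
  have hbJ : nvmap f a ∈ J' := lemB h0 hN h0' hN' f hfs hf0 a hc.1
  obtain ⟨b', hb'J, hb'gt, hb'min⟩ := exists_next hN' (lt_of_lt_of_le hlt (Fin.le_last _))
  have hfb' : nvmap f a' = b' := lemA h0 hN f hfs hc hlt hbJ hb'J hb'gt hb'min
  have hgb' : nvmap g a' = b' := by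
    rw [← ha']
    exact hfb'
  have hga : nvmap g a = nvmap f a := ha.symm
  have hcons' : ∀ s ∈ J', ¬ (nvmap f a < s ∧ s < b') :=
    fun s hs h => absurd (hb'min s hs h.1) (not_le.2 h.2)
  have hz : IsNondeg (t.app _ (bead J' (nvmap f a) b' hb'gt.le hcons')) :=
    ht _ _ hbJ hb'J hb'gt hcons'
  have hmapf := map_bead_eq f hle hcons hb'gt.le hcons' (nvmap_mono f) rfl hfb'
  have hmapg := map_bead_eq g hle hcons hb'gt.le hcons' (nvmap_mono g) hga hgb'
  have hσfs := beadσ_surj h0 hN h0' hN' f hfs hf0 hfN hc hle rfl hfb' hlt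
  have heq : beadσ (nvmap f) (nvmap_mono f) hle rfl hfb'
      = beadσ (nvmap g) (nvmap_mono g) hle hga hgb' := by
    refine epi_unique hz _ _ hσfs ?_
    have e1 : S.map (SimplexCategory.mkHom (beadσ (nvmap f) (nvmap_mono f) hle rfl hfb')).op
        (t.app _ (bead J' (nvmap f a) b' hb'gt.le hcons'))
        = t.app _ (f.app _ (bead J a a' hle hcons)) := by
      rw [← hmapf]
      exact (FunctorToTypes.naturality t _ _).symm
    have e2 : S.map (SimplexCategory.mkHom (beadσ (nvmap g) (nvmap_mono g) hle hga hgb')).op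
        (t.app _ (bead J' (nvmap f a) b' hb'gt.le hcons'))
        = t.app _ (g.app _ (bead J a a' hle hcons)) := by
      rw [← hmapg]
      exact (FunctorToTypes.naturality t _ _).symm
    rw [e1, e2]
    exact hu _ _
  intro v hv1 hv2
  have hva : a.val ≤ v.val := hv1
  have hbound : v.val - a.val < a'.val - a.val + 1 := by
    have h1 : v.val ≤ a'.val := hv2
    omega
  have hiv : inBead a a' ⟨v.val - a.val, hbound⟩ = v := by
    apply Fin.ext
    show a.val + (v.val - a.val) = v.val
    omega
  have hk := congrArg (fun (o : Fin (a'.val - a.val + 1) →o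
      Fin (b'.val - (nvmap f a).val + 1)) => (o ⟨v.val - a.val, hbound⟩).val) heq
  simp only [beadσ_val, hiv] at hk
  have hbf : (nvmap f a).val ≤ (nvmap f v).val := nvmap_mono f hv1
  have hbg : (nvmap f a).val ≤ (nvmap g v).val := by
    have h := nvmap_mono g hv1
    rw [hga] at h
    exact h
  apply Fin.ext
  omega

end Stmt13Aux6


theorem stmt13 {S : SSet} (N : ℕ) (J : Finset (Fin (N + 1)))
    (h0 : (0 : Fin (N + 1)) ∈ J) (hN : Fin.last N ∈ J)
    (N' : ℕ) (J' : Finset (Fin (N' + 1)))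
    (h0' : (0 : Fin (N' + 1)) ∈ J') (hN' : Fin.last N' ∈ J')
    (t : Necklace N' J' ⟶ S) (u : Necklace N J ⟶ S) (ht : TotallyNondeg t)
    (f g : Necklace N J ⟶ Necklace N' J')
    (hfs : LevelSurj f) (hgs : LevelSurj g)
    (hf0 : f.app _ (vtx J 0) = vtx J' 0)
    (hfN : f.app _ (vtx J (Fin.last N)) = vtx J' (Fin.last N'))
    (hg0 : g.app _ (vtx J 0) = vtx J' 0)
    (hgN : g.app _ (vtx J (Fin.last N)) = vtx J' (Fin.last N'))
    (hft : f ≫ t = u) (hgt : g ≫ t = u) : f = g := by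
  have hφ0 : nvmap f 0 = 0 := by
    have h := congrArg (fun y : (Necklace N' J') _⦋0⦌ => y.1 0) hf0
    exact h
  have hψ0 : nvmap g 0 = 0 := by
    have h := congrArg (fun y : (Necklace N' J') _⦋0⦌ => y.1 0) hg0
    exact h
  have hφN : nvmap f (Fin.last N) = Fin.last N' := by
    have h := congrArg (fun y : (Necklace N' J') _⦋0⦌ => y.1 0) hfN
    exact h
  have hψN : nvmap g (Fin.last N) = Fin.last N' := by
    have h := congrArg (fun y : (Necklace N' J') _⦋0⦌ => y.1 0) hgN
    exact h
  have hu : ∀ (m : SimplexCategoryᵒᵖ) (x : (Necklace N J).obj m),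
      t.app m (f.app m x) = t.app m (g.app m x) := by
    intro m x
    have h1 : (f ≫ t).app m x = (g ≫ t).app m x := by
      rw [hft, hgt]
    exact h1
  have hjoint : ∀ n : ℕ, ∀ j : Fin (N + 1), j.val ≤ n → j ∈ J → nvmap f j = nvmap g j := by
    intro n
    induction n with
    | zero =>
      intro j hj _
      have hj0 : j = 0 := Fin.ext (by simp only [Fin.val_zero]; omega)
      rw [hj0, hφ0, hψ0]
    | succ n ih =>
      intro j hj hjJ
      by_cases hj0 : j = 0
      · rw [hj0, hφ0, hψ0]
      · have hpos : 0 < j := Fin.pos_of_ne_zero hj0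
        obtain ⟨p, hpJ, hplt, hpmax⟩ := exists_maxlt h0 hpos
        have hpc : Consec J p j :=
          ⟨hpJ, hjJ, hplt, fun s hs hh => absurd (hpmax s hs hh.2) (not_le.2 hh.1)⟩
        have hpv : p.val ≤ n := by
          have h1 : p.val < j.val := hplt
          omega
        have hpe : nvmap f p = nvmap g p := ih p hpv hpJ
        rcases eq_or_lt_of_le (nvmap_mono f hplt.le) with he | hl
        · have hge : nvmap g p = nvmap g j := by
            rcases eq_or_lt_of_le (nvmap_mono g hplt.le) with he2 | hl2
            · exact he2
            · exfalso
              have hdeg : TotDeg (t.app _ (f.app _ (bead J p j hplt.le hpc.2.2.2))) :=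
                collapsed_totdeg f t hplt.le hpc.2.2.2 he
              have hdeg2 : TotDeg (t.app _ (g.app _ (bead J p j hplt.le hpc.2.2.2))) := by
                obtain ⟨y, hy⟩ := hdeg
                exact ⟨y, by rw [← hu _ _]; exact hy⟩
              exact nondeg_not_totdeg h0 hN h0' hN' g hgs hψ0 hψN t ht hpc hl2 hplt.le
                hpc.2.2.2 hdeg2
          rw [← he, ← hge, hpe]
        · have hl2 : nvmap g p < nvmap g j := by
            rcases eq_or_lt_of_le (nvmap_mono g hplt.le) with he2 | hl2
            · exfalso
              have hdeg : TotDeg (t.app _ (g.app _ (bead J p j hplt.le hpc.2.2.2))) :=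
                collapsed_totdeg g t hplt.le hpc.2.2.2 he2
              have hdeg2 : TotDeg (t.app _ (f.app _ (bead J p j hplt.le hpc.2.2.2))) := by
                obtain ⟨y, hy⟩ := hdeg
                exact ⟨y, by rw [hu _ _]; exact hy⟩
              exact nondeg_not_totdeg h0 hN h0' hN' f hfs hφ0 hφN t ht hpc hl hplt.le
                hpc.2.2.2 hdeg2
            · exact hl2
          have hpJ' : nvmap f p ∈ J' := lemB h0 hN h0' hN' f hfs hφ0 p hpJ
          obtain ⟨b', hb'J, hb'gt, hb'min⟩ := exists_next hN' (lt_of_lt_of_le hl (Fin.le_last _))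
          have e1 : nvmap f j = b' := lemA h0 hN f hfs hpc hl hpJ' hb'J hb'gt hb'min
          have e2 : nvmap g j = b' := by
            refine lemA h0 hN g hgs hpc hl2 ?_ hb'J ?_ ?_
            · rw [← hpe]
              exact hpJ'
            · rw [← hpe]
              exact hb'gt
            · intro s hs hlt'
              refine hb'min s hs ?_
              rw [hpe]
              exact hlt'
          rw [e1, e2]
  have hmain : ∀ v, nvmap f v = nvmap g v := by
    intro v
    by_cases hvl : v = Fin.last N
    · rw [hvl, hφN, hψN]
    · have hvlt : v < Fin.last N := lt_of_le_of_ne (Fin.le_last v) hvl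
      obtain ⟨a, haJ, hale, hamax⟩ := exists_maxle h0 v
      obtain ⟨a', ha'J, ha'gt, ha'min⟩ := exists_next hN hvlt
      have hac : Consec J a a' := by
        refine ⟨haJ, ha'J, lt_of_le_of_lt hale ha'gt, fun s hs hh => ?_⟩
        rcases le_or_gt s v with h' | h'
        · exact absurd (hamax s hs h') (not_le.2 hh.1)
        · exact absurd (ha'min s hs h') (not_le.2 hh.2)
      have hja := hjoint a.val a le_rfl haJ
      have hja' := hjoint a'.val a' le_rfl ha'J
      rcases eq_or_lt_of_le (nvmap_mono f hac.2.2.1.le) with he | hl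
      · have h1 : nvmap f v = nvmap f a := by
          refine le_antisymm ?_ (nvmap_mono f hale)
          rw [he]
          exact nvmap_mono f ha'gt.le
        have hge : nvmap g a = nvmap g a' := by
          rw [← hja, ← hja', he]
        have h2 : nvmap g v = nvmap g a := by
          refine le_antisymm ?_ (nvmap_mono g hale)
          rw [hge]
          exact nvmap_mono g ha'gt.le
        rw [h1, h2, hja]
      · have hl2 : nvmap g a < nvmap g a' := by
          rw [← hja, ← hja']
          exact hl
        exact lemF h0 hN h0' hN' f g hfs hgs hφ0 hφN hψ0 hψN t ht hu hac hac.2.2.1.le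
          hac.2.2.2 hja hl hl2 hja' v hale ha'gt.le
  apply NatTrans.ext
  funext m
  ext x
  refine Subtype.ext (OrderHom.ext _ _ (funext fun k => ?_))
  show (f.app m x).1 k = (g.app m x).1 k
  rw [app_apply, app_apply, hmain]


end Paper
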